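/- Let n ≥ 2 and k ∈ 𝒢ⁿ. Then there exists a matrix Â ∈ ℤ^{(n−1)×n} such that the n×n matrix A whose first row is k and whose remaining rows are the rows of Â belongs to SL(n,ℤ) (i.e. A has integer entries and det A = 1), and moreover |Â|_∞ ≤ |k|_∞, |A|_∞ = |k|_∞, and |A^{−1}|_∞ ≤ (n−1)^{(n−1)/2}·|k|_∞^{n−1}, where |M|_∞ denotes the maximum of the absolute values of the entries of a matrix (or vector) M. -/

import Mathlib

/-- `ℤⁿ_*`: nonzero integer vectors whose first nonzero component is positive. -/
def ZnStar {n : ℕ} (k : Fin n → ℤ) : Prop :=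
  k ≠ 0 ∧ ∀ j, (∀ i, i < j → k i = 0) → 0 ≤ k j

/-- `𝒢ⁿ`: generators of one-dimensional maximal lattices, i.e. `k ∈ ℤⁿ_*` with
`gcd (k₁, …, kₙ) = 1`. -/
def Gen {n : ℕ} (k : Fin n → ℤ) : Prop :=
  ZnStar k ∧ Finset.univ.gcd (fun i => (k i).natAbs) = 1


lemma emod_lt_abs' (a b : ℤ) (h : b ≠ 0) : a % b < |b| := by
  rcases h.lt_or_gt with hb | hb
  · rw [abs_of_neg hb, ← Int.emod_neg]
    exact Int.emod_lt_of_pos a (by omega)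
  · rw [abs_of_pos hb]; exact Int.emod_lt_of_pos a hb

lemma bezout_bdd (g : ℕ) (c : ℤ) (hgc : Nat.gcd g c.natAbs = 1) :
    ∃ u v : ℤ, u * g + v * c = 1 ∧ u.natAbs ≤ max c.natAbs 1 ∧ v.natAbs ≤ max g 1 := by
  rcases eq_or_ne c 0 with hc | hc
  · subst hc
    simp only [Int.natAbs_zero, Nat.gcd_zero_right] at hgc
    exact ⟨1, 0, by simp [hgc], by simp, by simp⟩
  · have hcop : IsCoprime (g : ℤ) c := by
      rw [Int.isCoprime_iff_gcd_eq_one]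
      simpa [Int.gcd] using hgc
    obtain ⟨a, b, hab⟩ := hcop
    set u : ℤ := a % c with hu
    have hau : c ∣ a - u := by
      rw [hu, Int.emod_def]
      exact ⟨a / c, by ring⟩
    have hdvd : c ∣ 1 - u * g := by
      have h2 : 1 - u * g = (a - u) * g + b * c := by
        rw [← hab]; ring
      rw [h2]
      exact dvd_add (Dvd.dvd.mul_right hau g) ⟨b, mul_comm b c⟩
    set v : ℤ := (1 - u * g) / c with hv
    have hvc : v * c = 1 - u * g := by
      rw [hv, mul_comm]; exact Int.mul_ediv_cancel' hdvd
    have hu0 : 0 ≤ u := Int.emod_nonneg a hc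
    have hult : u < |c| := emod_lt_abs' a c hc
    have habsc : |c| = (c.natAbs : ℤ) := Int.abs_eq_natAbs c
    refine ⟨u, v, by linarith [hvc], ?_, ?_⟩
    · refine le_max_of_le_left ?_
      rw [habsc] at hult
      omega
    · have hgm : (g:ℤ) ≤ ((g ⊔ 1 : ℕ) : ℤ) := by exact_mod_cast le_max_left g 1
      have h1m : (1:ℤ) ≤ ((g ⊔ 1 : ℕ) : ℤ) := by exact_mod_cast le_max_right g 1
      have hc1 : (1:ℤ) ≤ |c| := by have := abs_pos.mpr hc; omega
      have habs : |v| * |c| ≤ ((g ⊔ 1 : ℕ) : ℤ) * |c| := by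
        have hev : |v| * |c| = |1 - u * ↑g| := by rw [← abs_mul, hvc]
        rw [hev]
        have hug : 0 ≤ u * (g:ℤ) := mul_nonneg hu0 (by positivity)
        have hub : u * (g:ℤ) ≤ |c| * g := mul_le_mul_of_nonneg_right hult.le (by positivity)
        rw [abs_le]
        constructor
        · nlinarith
        · nlinarith
      have hfin : |v| ≤ ((g ⊔ 1 : ℕ) : ℤ) := le_of_mul_le_mul_right habs (abs_pos.mpr hc)
      rw [Int.abs_eq_natAbs] at hfin
      exact_mod_cast hfin

lemma updateRow_comm' {α : Type*} {m n : Type*} [DecidableEq m] (M : Matrix m n α) {i i' : m}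
    (h : i ≠ i') (b b' : n → α) :
    (M.updateRow i b).updateRow i' b' = (M.updateRow i' b').updateRow i b := by
  ext p q
  by_cases h1 : p = i' <;> by_cases h2 : p = i <;>
    simp_all [Matrix.updateRow_apply]

lemma key (n : ℕ) : ∀ (k : Fin (n+1) → ℤ), Gen k →
    ∃ A B : Matrix (Fin (n+1)) (Fin (n+1)) ℤ,
      (∀ j, A 0 j = k j) ∧ A.det = 1 ∧
      (∀ i j, (A i j).natAbs ≤ Finset.univ.sup fun i' => (k i').natAbs) ∧
      A * B = 1 ∧ B * A = 1 ∧
      (∀ i j, (B i j).natAbs ≤ (Finset.univ.sup fun i' => (k i').natAbs) ^ n) := by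
  induction n with
  | zero =>
    intro k hk
    have h1 : (k 0).natAbs = 1 := by
      have := hk.2
      simpa using this
    have h0 : 0 ≤ k 0 := hk.1.2 0 (fun i hi => absurd hi (by simp [Fin.lt_def, Fin.fin_one_eq_zero i]))
    have hk0 : k 0 = 1 := by omega
    refine ⟨1, 1, ?_, by simp, ?_, by simp, by simp, ?_⟩
    · intro j
      rw [Fin.fin_one_eq_zero j]
      simp [hk0]
    · intro i j
      rw [Fin.fin_one_eq_zero i, Fin.fin_one_eq_zero j]
      have hs : Finset.univ.sup (fun i' => (k i').natAbs) = 1 := by simpa using h1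
      simp [hs, h1]
    · intro i j
      rw [Fin.fin_one_eq_zero i, Fin.fin_one_eq_zero j]
      simp
  | succ n IH =>
    intro k hk
    set K : ℕ := Finset.univ.sup (fun i' => (k i').natAbs) with hK
    have hKle : ∀ i, (k i).natAbs ≤ K := fun i => by
      rw [hK]; exact Finset.le_sup (f := fun i' => (k i').natAbs) (Finset.mem_univ i)
    have hK1 : 1 ≤ K := by
      obtain ⟨i, hi⟩ := Function.ne_iff.mp hk.1.1
      have hi' : k i ≠ 0 := by simpa using hi
      exact le_trans (Int.natAbs_pos.mpr hi') (hKle i)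
    set kh : Fin (n+1) → ℤ := fun i => k i.castSucc with hkh
    set c : ℤ := k (Fin.last (n+1)) with hc
    set g : ℕ := Finset.univ.gcd (fun i => (kh i).natAbs) with hg
    have F1 : ∀ i, (g : ℤ) ∣ kh i := fun i =>
      Int.dvd_natAbs.mp (Int.natCast_dvd_natCast.mpr (Finset.gcd_dvd (Finset.mem_univ i)))
    have F4 : Nat.gcd g c.natAbs = 1 := by
      have hdall : ∀ i : Fin (n+2), Nat.gcd g c.natAbs ∣ (k i).natAbs := by
        intro i
        induction i using Fin.lastCases with
        | last => exact Nat.gcd_dvd_right _ _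
        | cast j => exact (Nat.gcd_dvd_left _ _).trans (Finset.gcd_dvd (Finset.mem_univ j))
      exact Nat.dvd_one.mp (hk.2 ▸ Finset.dvd_gcd (fun i _ => hdall i))
    obtain ⟨k', hGen', P1, P3, P4, F7⟩ :
        ∃ k' : Fin (n+1) → ℤ, Gen k' ∧ (∀ i, (g:ℤ) * k' i = kh i) ∧
          (∀ i, (k' i).natAbs ≤ K) ∧ (∀ j, (max g 1) * (k' j).natAbs ≤ K) ∧ g ≤ K := by
      rcases Nat.eq_zero_or_pos g with hg0 | hgpos
      · have hgcd0 : Finset.univ.gcd (fun i => (kh i).natAbs) = 0 := by rw [← hg]; exact hg0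
        have hkh0 : ∀ i, kh i = 0 := fun i =>
          Int.natAbs_eq_zero.mp (Finset.gcd_eq_zero_iff.mp hgcd0 i (Finset.mem_univ i))
        refine ⟨fun i => if i = 0 then 1 else 0, ⟨⟨?_, ?_⟩, ?_⟩, ?_, ?_, ?_, ?_⟩
        · intro h; simpa using congrFun h 0
        · intro j _; dsimp only; split <;> omega
        · have hd := Finset.gcd_dvd (f := fun i => ((if i = 0 then 1 else 0 : ℤ)).natAbs)
            (Finset.mem_univ (0 : Fin (n+1)))
          simp only [if_pos rfl, Int.natAbs_one] at hd
          exact Nat.dvd_one.mp hd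
        · intro i; rw [hg0, hkh0 i]; simp
        · intro i; dsimp only; split <;> simp [hK1]
        · intro j; rw [hg0]; dsimp only; split <;> simp [hK1]
        · rw [hg0]; exact Nat.zero_le K
      · have hgne : g ≠ 0 := hgpos.ne'
        have hex : ∃ i, (kh i).natAbs ≠ 0 := by
          by_contra hall
          push_neg at hall
          exact hgne (by rw [hg]; exact Finset.gcd_eq_zero_iff.mpr (fun i _ => hall i))
        obtain ⟨i₀, hi₀⟩ := hex
        have hP1 : ∀ i, (g:ℤ) * (kh i / (g:ℤ)) = kh i := fun i => Int.mul_ediv_cancel' (F1 i)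
        have hnatabs : ∀ i, ((kh i / (g:ℤ)).natAbs) = (kh i).natAbs / g := fun i => by
          rw [Int.natAbs_ediv]; simp [F1 i]
        refine ⟨fun i => kh i / (g:ℤ), ⟨⟨?_, ?_⟩, ?_⟩, hP1, ?_, ?_, ?_⟩
        · intro h0
          have := congrFun h0 i₀
          simp only [Pi.zero_apply] at this
          rw [← hP1 i₀, this, mul_zero] at hi₀
          simp at hi₀
        · intro j hj
          have hkj : 0 ≤ kh j := by
            have := hk.1.2 j.castSucc ?_
            · exact this
            · intro i hi
              have hival : (i : ℕ) < (j : ℕ) := by simpa [Fin.lt_def] using hi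
              have hi2 : (i : ℕ) < n + 1 := hival.trans j.isLt
              set i' : Fin (n+1) := ⟨i.1, hi2⟩ with hi'
              have hieq : i = i'.castSucc := by apply Fin.ext; rfl
              have hz : kh i' / (g:ℤ) = 0 := hj i' (by simpa [Fin.lt_def, hi'] using hival)
              have : kh i' = 0 := by rw [← hP1 i', hz, mul_zero]
              rw [hieq]
              exact this
          exact Int.ediv_nonneg hkj (by positivity)
        · rw [Finset.gcd_congr rfl (fun a _ => hnatabs a), hg]
          exact Finset.gcd_div_eq_one (Finset.mem_univ i₀) hi₀
        · intro i
          rw [hnatabs]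
          exact le_trans (Nat.div_le_self _ _) (hKle i.castSucc)
        · intro j
          rw [Nat.max_eq_left hgpos, hnatabs]
          calc g * ((kh j).natAbs / g) = ((kh j).natAbs / g) * g := mul_comm _ _
            _ ≤ (kh j).natAbs := Nat.div_mul_le_self _ _
            _ ≤ K := hKle j.castSucc
        · exact le_trans (Nat.le_of_dvd (Nat.pos_of_ne_zero hi₀)
            (Finset.gcd_dvd (Finset.mem_univ i₀))) (hKle i₀.castSucc)
    obtain ⟨A', B', hA'0, hdet', hA'bd, hAB', hBA', hB'bd⟩ := IH k' hGen'
    set K' : ℕ := Finset.univ.sup (fun i' => (k' i').natAbs) with hK'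
    have hK'K : K' ≤ K := Finset.sup_le (fun i _ => P3 i)
    obtain ⟨u, v, huv, hu, hvb⟩ := bezout_bdd g c F4
    have hu' : u.natAbs ≤ K := le_trans hu (max_le (hKle (Fin.last (n+1))) hK1)
    have hv' : v.natAbs ≤ K := le_trans hvb (max_le F7 hK1)
    have F10 : ∀ j, (v * k' j).natAbs ≤ K := fun j => by
      rw [Int.natAbs_mul]
      exact le_trans (Nat.mul_le_mul_right _ hvb) (P4 j)
    -- Sum-world matrices
    set A1 : Matrix (Fin (n+1) ⊕ Fin 1) (Fin (n+1) ⊕ Fin 1) ℤ :=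
      Matrix.fromBlocks A' 0 0 1 with hA1
    set N : Matrix (Fin (n+1) ⊕ Fin 1) (Fin (n+1) ⊕ Fin 1) ℤ :=
      Matrix.of (Sum.elim
        (fun i => Sum.elim (fun j => if i = 0 then (g:ℤ) * k' j else A' i j)
                           (fun _ => if i = 0 then c else 0))
        (fun _ => Sum.elim (fun j => -v * k' j) (fun _ => u))) with hN
    set Bm : Matrix (Fin (n+1) ⊕ Fin 1) (Fin (n+1) ⊕ Fin 1) ℤ :=
      Matrix.of (Sum.elim
        (fun i => Sum.elim (fun j => if j = 0 then u * B' i 0 else B' i j)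
                           (fun _ => -c * B' i 0))
        (fun _ => Sum.elim (fun j => if j = 0 then v else 0) (fun _ => (g:ℤ)))) with hBm
    have hNll : ∀ i j, N (Sum.inl i) (Sum.inl j) = if i = 0 then (g:ℤ) * k' j else A' i j :=
      fun i j => rfl
    have hNlr : ∀ i j, N (Sum.inl i) (Sum.inr j) = if i = 0 then c else 0 := fun i j => rfl
    have hNrl : ∀ i j, N (Sum.inr i) (Sum.inl j) = -v * k' j := fun i j => rfl
    have hNrr : ∀ i j, N (Sum.inr i) (Sum.inr j) = u := fun i j => rfl
    have hBll : ∀ i j, Bm (Sum.inl i) (Sum.inl j) = if j = 0 then u * B' i 0 else B' i j :=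
      fun i j => rfl
    have hBlr : ∀ i j, Bm (Sum.inl i) (Sum.inr j) = -c * B' i 0 := fun i j => rfl
    have hBrl : ∀ i j, Bm (Sum.inr i) (Sum.inl j) = if j = 0 then v else 0 := fun i j => rfl
    have hBrr : ∀ i j, Bm (Sum.inr i) (Sum.inr j) = (g:ℤ) := fun i j => rfl
    have hA1ll : ∀ i j, A1 (Sum.inl i) (Sum.inl j) = A' i j := fun i j => rfl
    have hA1lr : ∀ i j, A1 (Sum.inl i) (Sum.inr j) = 0 := fun i j => rfl
    have hA1rl : ∀ i j, A1 (Sum.inr i) (Sum.inl j) = 0 := fun i j => rfl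
    have hA1rr : ∀ (i j : Fin 1), A1 (Sum.inr i) (Sum.inr j) = 1 := fun i j => by
      rw [hA1]
      simp [Matrix.fromBlocks_apply₂₂, Matrix.one_apply, Fin.fin_one_eq_zero i,
        Fin.fin_one_eq_zero j]
    have hA1det : A1.det = 1 := by
      rw [hA1, Matrix.det_fromBlocks_zero₂₁, hdet', Matrix.det_one, mul_one]
    have hlr : (Sum.inl (0 : Fin (n+1)) : Fin (n+1) ⊕ Fin 1) ≠ Sum.inr 0 := by simp
    have hdetN : N.det = 1 := by
      have hNupd : N = Matrix.updateRow
          (Matrix.updateRow A1 (Sum.inl 0) ((g:ℤ) • A1 (Sum.inl 0) + c • A1 (Sum.inr 0)))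
          (Sum.inr 0) ((-v) • A1 (Sum.inl 0) + u • A1 (Sum.inr 0)) := by
        ext p q
        rcases p with i | i
        · have hne : (Sum.inl i : Fin (n+1) ⊕ Fin 1) ≠ Sum.inr 0 := by simp
          rw [Matrix.updateRow_ne hne, Matrix.updateRow_apply]
          by_cases hi : i = 0
          · subst hi
            rw [if_pos rfl]
            rcases q with q | q
            · rw [hNll, if_pos rfl]
              simp only [Pi.add_apply, Pi.smul_apply, smul_eq_mul]
              rw [hA1ll, hA1rl, hA'0]
              ring
            · rw [hNlr, if_pos rfl]
              simp only [Pi.add_apply, Pi.smul_apply, smul_eq_mul]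
              rw [hA1lr, hA1rr]
              ring
          · rw [if_neg (by simpa using hi)]
            rcases q with q | q
            · rw [hNll, if_neg hi, hA1ll]
            · rw [hNlr, if_neg hi, hA1lr]
        · have hieq : i = 0 := Fin.fin_one_eq_zero i
          subst hieq
          rw [Matrix.updateRow_self]
          rcases q with q | q
          · rw [hNrl]
            simp only [Pi.add_apply, Pi.smul_apply, smul_eq_mul]
            rw [hA1ll, hA1rl, hA'0]
            ring
          · rw [hNrr]
            simp only [Pi.add_apply, Pi.smul_apply, smul_eq_mul]
            rw [hA1lr, hA1rr]
            ring
      rw [hNupd]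
      rw [Matrix.det_updateRow_add, Matrix.det_updateRow_smul, Matrix.det_updateRow_smul]
      have hPr : (Matrix.updateRow A1 (Sum.inl 0)
          ((g:ℤ) • A1 (Sum.inl 0) + c • A1 (Sum.inr 0))) (Sum.inr 0) = A1 (Sum.inr 0) :=
        Matrix.updateRow_ne (by simp)
      have t2 : ((Matrix.updateRow A1 (Sum.inl 0)
          ((g:ℤ) • A1 (Sum.inl 0) + c • A1 (Sum.inr 0))).updateRow (Sum.inr 0)
            (A1 (Sum.inr 0))).det = (g:ℤ) := by
        have hself : (Matrix.updateRow A1 (Sum.inl 0)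
            ((g:ℤ) • A1 (Sum.inl 0) + c • A1 (Sum.inr 0))).updateRow (Sum.inr 0)
              ((Matrix.updateRow A1 (Sum.inl 0)
                ((g:ℤ) • A1 (Sum.inl 0) + c • A1 (Sum.inr 0))) (Sum.inr 0)) =
            Matrix.updateRow A1 (Sum.inl 0) ((g:ℤ) • A1 (Sum.inl 0) + c • A1 (Sum.inr 0)) :=
          Matrix.updateRow_eq_self _ _
        rw [hPr] at hself
        rw [hself]
        rw [Matrix.det_updateRow_add, Matrix.det_updateRow_smul, Matrix.det_updateRow_smul,
          Matrix.updateRow_eq_self, hA1det, Matrix.det_updateRow_eq_zero (Ne.symm hlr)]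
        ring
      have hswap : ((A1.updateRow (Sum.inr 0) (A1 (Sum.inl 0))).updateRow (Sum.inl 0)
          (A1 (Sum.inr 0))) = A1.submatrix (Equiv.swap (Sum.inl 0) (Sum.inr 0)) id := by
        ext p q
        by_cases hp1 : p = Sum.inl 0
        · subst hp1
          rw [Matrix.updateRow_self, Matrix.submatrix_apply, Equiv.swap_apply_left, id]
        · by_cases hp2 : p = Sum.inr 0
          · subst hp2
            rw [Matrix.updateRow_ne (Ne.symm hlr), Matrix.updateRow_self,
              Matrix.submatrix_apply, Equiv.swap_apply_right, id]
          · rw [Matrix.updateRow_ne hp1, Matrix.updateRow_ne hp2, Matrix.submatrix_apply,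
              Equiv.swap_apply_of_ne_of_ne hp1 hp2, id]
      have t1 : ((Matrix.updateRow A1 (Sum.inl 0)
          ((g:ℤ) • A1 (Sum.inl 0) + c • A1 (Sum.inr 0))).updateRow (Sum.inr 0)
            (A1 (Sum.inl 0))).det = -c := by
        rw [updateRow_comm' A1 hlr, Matrix.det_updateRow_add, Matrix.det_updateRow_smul,
          Matrix.det_updateRow_smul]
        have hz : (((A1.updateRow (Sum.inr 0) (A1 (Sum.inl 0))).updateRow (Sum.inl 0)
            (A1 (Sum.inl 0)))).det = 0 := by
          apply Matrix.det_zero_of_row_eq hlr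
          rw [Matrix.updateRow_self, Matrix.updateRow_ne (Ne.symm hlr), Matrix.updateRow_self]
        rw [hz, hswap, Matrix.det_permute, Equiv.Perm.sign_swap hlr, hA1det]
        simp
      rw [t1, t2]
      linear_combination huv
    have hone : ∀ x y, (∑ t, A' x t * B' t y) = if x = y then (1:ℤ) else 0 := by
      intro x y
      have := congrFun (congrFun hAB' x) y
      rwa [Matrix.mul_apply, Matrix.one_apply] at this
    have htwo : ∀ x y, (∑ t, B' x t * A' t y) = if x = y then (1:ℤ) else 0 := by
      intro x y
      have := congrFun (congrFun hBA' x) y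
      rwa [Matrix.mul_apply, Matrix.one_apply] at this
    have honell : ∀ (i j : Fin (n+1)),
        (1 : Matrix (Fin (n+1) ⊕ Fin 1) (Fin (n+1) ⊕ Fin 1) ℤ) (Sum.inl i) (Sum.inl j)
          = if i = j then 1 else 0 := fun i j => by simp [Matrix.one_apply]
    have honelr : ∀ (i : Fin (n+1)) (j : Fin 1),
        (1 : Matrix (Fin (n+1) ⊕ Fin 1) (Fin (n+1) ⊕ Fin 1) ℤ) (Sum.inl i) (Sum.inr j) = 0 :=
      fun i j => by simp [Matrix.one_apply]
    have honerl : ∀ (i : Fin 1) (j : Fin (n+1)),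
        (1 : Matrix (Fin (n+1) ⊕ Fin 1) (Fin (n+1) ⊕ Fin 1) ℤ) (Sum.inr i) (Sum.inl j) = 0 :=
      fun i j => by simp [Matrix.one_apply]
    have honerr : ∀ (i j : Fin 1),
        (1 : Matrix (Fin (n+1) ⊕ Fin 1) (Fin (n+1) ⊕ Fin 1) ℤ) (Sum.inr i) (Sum.inr j) = 1 :=
      fun i j => by
        rw [Fin.fin_one_eq_zero i, Fin.fin_one_eq_zero j]
        simp [Matrix.one_apply]
    have hNB : N * Bm = 1 := by
      ext p q
      rw [Matrix.mul_apply, Fintype.sum_sum_type, Fin.sum_univ_one]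
      rcases p with i | i <;> rcases q with j | j
      · by_cases hi : i = 0
        · subst hi
          by_cases hj : j = 0
          · subst hj
            have e1 : (∑ t, N (Sum.inl 0) (Sum.inl t) * Bm (Sum.inl t) (Sum.inl 0))
                = ((g : ℤ) * u) * ∑ t, A' 0 t * B' t 0 := by
              rw [Finset.mul_sum]
              refine Finset.sum_congr rfl fun t _ => ?_
              rw [hNll, hBll, if_pos rfl, if_pos rfl, hA'0]
              ring
            rw [e1, hone, hNlr, hBrl, if_pos rfl, if_pos rfl, if_pos rfl, honell, if_pos rfl]
            linear_combination huv
          · have e1 : (∑ t, N (Sum.inl 0) (Sum.inl t) * Bm (Sum.inl t) (Sum.inl j))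
                = (g : ℤ) * ∑ t, A' 0 t * B' t j := by
              rw [Finset.mul_sum]
              refine Finset.sum_congr rfl fun t _ => ?_
              rw [hNll, hBll, if_pos rfl, if_neg hj, hA'0]
              ring
            rw [e1, hone, if_neg (Ne.symm hj), hNlr, hBrl, if_pos rfl, if_neg hj, honell,
              if_neg (Ne.symm hj)]
            ring
        · by_cases hj : j = 0
          · subst hj
            have e1 : (∑ t, N (Sum.inl i) (Sum.inl t) * Bm (Sum.inl t) (Sum.inl 0))
                = u * ∑ t, A' i t * B' t 0 := by
              rw [Finset.mul_sum]
              refine Finset.sum_congr rfl fun t _ => ?_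
              rw [hNll, hBll, if_neg hi, if_pos rfl]
              ring
            rw [e1, hone, if_neg hi, hNlr, hBrl, if_neg hi, if_pos rfl, honell, if_neg hi]
            ring
          · have e1 : (∑ t, N (Sum.inl i) (Sum.inl t) * Bm (Sum.inl t) (Sum.inl j))
                = ∑ t, A' i t * B' t j := by
              refine Finset.sum_congr rfl fun t _ => ?_
              rw [hNll, hBll, if_neg hi, if_neg hj]
            rw [e1, hone, hNlr, hBrl, if_neg hi, if_neg hj, honell]
            ring
      · obtain rfl : j = 0 := Fin.fin_one_eq_zero j
        by_cases hi : i = 0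
        · subst hi
          have e1 : (∑ t, N (Sum.inl 0) (Sum.inl t) * Bm (Sum.inl t) (Sum.inr 0))
              = (-((g:ℤ) * c)) * ∑ t, A' 0 t * B' t 0 := by
            rw [Finset.mul_sum]
            refine Finset.sum_congr rfl fun t _ => ?_
            rw [hNll, hBlr, if_pos rfl, hA'0]
            ring
          rw [e1, hone, if_pos rfl, hNlr, hBrr, if_pos rfl, honelr]
          ring
        · have e1 : (∑ t, N (Sum.inl i) (Sum.inl t) * Bm (Sum.inl t) (Sum.inr 0))
              = (-c) * ∑ t, A' i t * B' t 0 := by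
            rw [Finset.mul_sum]
            refine Finset.sum_congr rfl fun t _ => ?_
            rw [hNll, hBlr, if_neg hi]
            ring
          rw [e1, hone, if_neg hi, hNlr, if_neg hi, hBrr, honelr]
          ring
      · obtain rfl : i = 0 := Fin.fin_one_eq_zero i
        by_cases hj : j = 0
        · subst hj
          have e1 : (∑ t, N (Sum.inr 0) (Sum.inl t) * Bm (Sum.inl t) (Sum.inl 0))
              = (-(v * u)) * ∑ t, A' 0 t * B' t 0 := by
            rw [Finset.mul_sum]
            refine Finset.sum_congr rfl fun t _ => ?_
            rw [hNrl, hBll, if_pos rfl, hA'0]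
            ring
          rw [e1, hone, if_pos rfl, hNrr, hBrl, if_pos rfl, honerl]
          ring
        · have e1 : (∑ t, N (Sum.inr 0) (Sum.inl t) * Bm (Sum.inl t) (Sum.inl j))
              = (-v) * ∑ t, A' 0 t * B' t j := by
            rw [Finset.mul_sum]
            refine Finset.sum_congr rfl fun t _ => ?_
            rw [hNrl, hBll, if_neg hj, hA'0]
            ring
          rw [e1, hone, if_neg (Ne.symm hj), hNrr, hBrl, if_neg hj, honerl]
          ring
      · obtain rfl : i = 0 := Fin.fin_one_eq_zero i
        obtain rfl : j = 0 := Fin.fin_one_eq_zero j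
        have e1 : (∑ t, N (Sum.inr 0) (Sum.inl t) * Bm (Sum.inl t) (Sum.inr 0))
            = (v * c) * ∑ t, A' 0 t * B' t 0 := by
          rw [Finset.mul_sum]
          refine Finset.sum_congr rfl fun t _ => ?_
          rw [hNrl, hBlr, hA'0]
          ring
        rw [e1, hone, if_pos rfl, hNrr, hBrr, honerr]
        linear_combination huv
    have hBN : Bm * N = 1 := by
      ext p q
      rw [Matrix.mul_apply, Fintype.sum_sum_type, Fin.sum_univ_one]
      rcases p with i | i <;> rcases q with j | j
      · have e1 : (∑ t, Bm (Sum.inl i) (Sum.inl t) * N (Sum.inl t) (Sum.inl j))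
            = u * B' i 0 * ((g:ℤ) * k' j) + ∑ t : Fin n, B' i t.succ * A' t.succ j := by
          rw [Fin.sum_univ_succ]
          refine congrArg₂ (· + ·) ?_ (Finset.sum_congr rfl fun t _ => ?_)
          · rw [hBll, hNll]
            simp
          · rw [hBll, hNll, if_neg (Fin.succ_ne_zero t), if_neg (Fin.succ_ne_zero t)]
        have h2 := htwo i j
        rw [Fin.sum_univ_succ, hA'0] at h2
        rw [e1, hBlr, hNrl, honell]
        linear_combination h2 + (B' i 0 * k' j) * huv
      · obtain rfl : j = 0 := Fin.fin_one_eq_zero j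
        have e1 : (∑ t, Bm (Sum.inl i) (Sum.inl t) * N (Sum.inl t) (Sum.inr 0))
            = u * B' i 0 * c := by
          rw [Fin.sum_univ_succ]
          have hz : ∀ t : Fin n, Bm (Sum.inl i) (Sum.inl t.succ) * N (Sum.inl t.succ) (Sum.inr 0)
              = 0 := fun t => by
            rw [hNlr, if_neg (Fin.succ_ne_zero t), mul_zero]
          rw [Finset.sum_congr rfl (fun t _ => hz t), Finset.sum_const_zero, hBll, hNlr,
            if_pos rfl, if_pos rfl, add_zero]
        rw [e1, hBlr, hNrr, honelr]
        ring
      · obtain rfl : i = 0 := Fin.fin_one_eq_zero i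
        have e1 : (∑ t, Bm (Sum.inr 0) (Sum.inl t) * N (Sum.inl t) (Sum.inl j))
            = v * ((g:ℤ) * k' j) := by
          rw [Fin.sum_univ_succ]
          have hz : ∀ t : Fin n, Bm (Sum.inr 0) (Sum.inl t.succ) * N (Sum.inl t.succ) (Sum.inl j)
              = 0 := fun t => by
            rw [hBrl, if_neg (Fin.succ_ne_zero t), zero_mul]
          rw [Finset.sum_congr rfl (fun t _ => hz t), Finset.sum_const_zero, hBrl, hNll,
            if_pos rfl, if_pos rfl, add_zero]
        rw [e1, hBrr, hNrl, honerl]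
        ring
      · obtain rfl : i = 0 := Fin.fin_one_eq_zero i
        obtain rfl : j = 0 := Fin.fin_one_eq_zero j
        have e1 : (∑ t, Bm (Sum.inr 0) (Sum.inl t) * N (Sum.inl t) (Sum.inr 0)) = v * c := by
          rw [Fin.sum_univ_succ]
          have hz : ∀ t : Fin n, Bm (Sum.inr 0) (Sum.inl t.succ) * N (Sum.inl t.succ) (Sum.inr 0)
              = 0 := fun t => by
            rw [hBrl, if_neg (Fin.succ_ne_zero t), zero_mul]
          rw [Finset.sum_congr rfl (fun t _ => hz t), Finset.sum_const_zero, hBrl, hNlr,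
            if_pos rfl, if_pos rfl, add_zero]
        rw [e1, hBrr, hNrr, honerr]
        linear_combination huv
    set e := (finSumFinEquiv : Fin (n+1) ⊕ Fin 1 ≃ Fin (n+1+1)) with he
    have hsymm0 : e.symm (0 : Fin (n+1+1)) = Sum.inl (0 : Fin (n+1)) := by
      rw [he, show (0 : Fin (n+1+1)) = Fin.castAdd 1 (0 : Fin (n+1)) from rfl,
        finSumFinEquiv_symm_apply_castAdd]
    have hsymmc : ∀ j : Fin (n+1), e.symm j.castSucc = Sum.inl j := fun j => by
      rw [he, show (j.castSucc : Fin (n+1+1)) = Fin.castAdd 1 j from rfl,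
        finSumFinEquiv_symm_apply_castAdd]
    have hsymml : e.symm (Fin.last (n+1)) = Sum.inr 0 := by
      rw [he]; exact finSumFinEquiv_symm_last
    refine ⟨N.submatrix e.symm e.symm, Bm.submatrix e.symm e.symm, ?_, ?_, ?_, ?_, ?_, ?_⟩
    · intro j
      rw [Matrix.submatrix_apply, hsymm0]
      induction j using Fin.lastCases with
      | last =>
        rw [hsymml, hNlr, if_pos rfl, hc]
      | cast j' =>
        rw [hsymmc, hNll, if_pos rfl, P1, hkh]
    · rw [Matrix.det_submatrix_equiv_self e.symm N, hdetN]
    · intro i j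
      rw [Matrix.submatrix_apply]
      rcases e.symm i with i' | i' <;> rcases e.symm j with j' | j'
      · rw [hNll]
        split
        · rw [P1 j']
          exact hKle j'.castSucc
        · exact le_trans (hA'bd i' j') hK'K
      · rw [hNlr]
        split
        · exact hKle (Fin.last (n+1))
        · exact Nat.zero_le K
      · rw [hNrl, neg_mul, Int.natAbs_neg]
        exact F10 j'
      · rw [hNrr]
        exact hu'
    · rw [Matrix.submatrix_mul_equiv N Bm _ e.symm _, hNB, Matrix.submatrix_one_equiv]
    · rw [Matrix.submatrix_mul_equiv Bm N _ e.symm _, hBN, Matrix.submatrix_one_equiv]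
    · intro i j
      rw [Matrix.submatrix_apply]
      have hKpow : K' ^ n ≤ K ^ (n+1) := le_trans (Nat.pow_le_pow_left hK'K n)
        (Nat.pow_le_pow_right hK1 (Nat.le_succ n))
      have hKK : K ≤ K ^ (n+1) := by
        calc K = K ^ 1 := (pow_one K).symm
          _ ≤ K ^ (n+1) := Nat.pow_le_pow_right hK1 (by omega)
      rcases e.symm i with i' | i' <;> rcases e.symm j with j' | j'
      · rw [hBll]
        split
        · rw [Int.natAbs_mul]
          calc u.natAbs * (B' i' 0).natAbs ≤ K * K' ^ n := Nat.mul_le_mul hu' (hB'bd i' 0)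
            _ ≤ K * K ^ n := Nat.mul_le_mul_left _ (Nat.pow_le_pow_left hK'K n)
            _ = K ^ (n+1) := by rw [pow_succ, Nat.mul_comm]
        · exact le_trans (hB'bd i' j') hKpow
      · rw [hBlr, neg_mul, Int.natAbs_neg, Int.natAbs_mul]
        calc c.natAbs * (B' i' 0).natAbs ≤ K * K ^ n :=
            Nat.mul_le_mul (hKle (Fin.last (n+1)))
              (le_trans (hB'bd i' 0) (Nat.pow_le_pow_left hK'K n))
          _ = K ^ (n+1) := by rw [pow_succ, Nat.mul_comm]
      · rw [hBrl]
        split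
        · exact le_trans hv' hKK
        · simp
      · rw [hBrr]
        simpa using le_trans F7 hKK

/-- For `n ≥ 2` (written `n = m + 2`) and `k ∈ 𝒢ⁿ` there is an integer matrix
`A` whose first row is `k` (the remaining rows forming the matrix `Â ∈ ℤ^{(n−1)×n}`), with
`det A = 1` (so `A ∈ SL(n,ℤ)`), `|Â|_∞ ≤ |k|_∞`, `|A|_∞ = |k|_∞`, and whose (integer) inverse
`B` satisfies `|A⁻¹|_∞ = |B|_∞ ≤ (n−1)^{(n−1)/2}·|k|_∞^{n−1}`. -/
theorem bezout_matrix_exists {m : ℕ} (k : Fin (m + 2) → ℤ) (hk : Gen k) :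
    ∃ A : Matrix (Fin (m + 2)) (Fin (m + 2)) ℤ,
      (∀ j, A 0 j = k j) ∧
      A.det = 1 ∧
      (∀ i, i ≠ (0 : Fin (m + 2)) → ∀ j,
        (A i j).natAbs ≤ Finset.univ.sup fun i' => (k i').natAbs) ∧
      ((Finset.univ.sup fun i => Finset.univ.sup fun j => (A i j).natAbs)
        = Finset.univ.sup fun i' => (k i').natAbs) ∧
      ∃ B : Matrix (Fin (m + 2)) (Fin (m + 2)) ℤ, A * B = 1 ∧ B * A = 1 ∧
        ∀ i j, |(B i j : ℝ)| ≤
          (((m : ℝ) + 2) - 1) ^ ((((m : ℝ) + 2) - 1) / 2) *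
            ((Finset.univ.sup fun i' => (k i').natAbs : ℕ) : ℝ) ^ (m + 1) := by
  obtain ⟨A, B, h0, hdet, hbd, hAB, hBA, hBbd⟩ := key (m+1) k hk
  refine ⟨A, h0, hdet, fun i _ j => hbd i j, ?_, B, hAB, hBA, ?_⟩
  · apply le_antisymm
    · exact Finset.sup_le fun i _ => Finset.sup_le fun j _ => hbd i j
    · refine Finset.sup_le fun i' _ => ?_
      calc (k i').natAbs = (A 0 i').natAbs := by rw [h0 i']
        _ ≤ Finset.univ.sup fun j => (A 0 j).natAbs :=
            Finset.le_sup (f := fun j => (A 0 j).natAbs) (Finset.mem_univ i')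
        _ ≤ _ := Finset.le_sup (f := fun i => Finset.univ.sup fun j => (A i j).natAbs)
            (Finset.mem_univ 0)
  · intro i j
    have hC : (1:ℝ) ≤ (((m : ℝ) + 2) - 1) ^ ((((m : ℝ) + 2) - 1) / 2) := by
      apply Real.one_le_rpow
      · have : (0:ℝ) ≤ (m:ℝ) := Nat.cast_nonneg m
        linarith
      · have : (0:ℝ) ≤ (m:ℝ) := Nat.cast_nonneg m
        linarith
    calc |(B i j : ℝ)| = (((B i j).natAbs : ℕ) : ℝ) := by
          rw [← Int.cast_abs, Int.abs_eq_natAbs, Int.cast_natCast]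
      _ ≤ (((Finset.univ.sup fun i' => (k i').natAbs) ^ (m+1) : ℕ) : ℝ) :=
          Nat.cast_le.mpr (hBbd i j)
      _ = ((Finset.univ.sup fun i' => (k i').natAbs : ℕ) : ℝ) ^ (m+1) := by push_cast; ring
      _ ≤ _ := le_mul_of_one_le_left (by positivity) hC
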